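/- Any graph on n vertices with e edges contains at least e(4e − n²)/(3n) triangles. -/

import Mathlib

open Finset

private lemma triple_ite_eq {A B C : Prop} [Decidable A] [Decidable B] [Decidable C] :
    (if A ∧ B ∧ C then (1 : ℕ) else 0) =
      (if A then 1 else 0) * ((if B then 1 else 0) * (if C then 1 else 0)) := by
  by_cases hA : A <;> by_cases hB : B <;> by_cases hC : C <;> simp [*]

private lemma six_perm_card {α : Type*} [DecidableEq α] (a b c : α) :
    ({(a,b,c),(a,c,b),(b,a,c),(b,c,a),(c,a,b),(c,b,a)} : Finset (α×α×α)).card ≤ 6 := by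
  refine (card_insert_le _ _).trans (Nat.succ_le_succ ?_)
  refine (card_insert_le _ _).trans (Nat.succ_le_succ ?_)
  refine (card_insert_le _ _).trans (Nat.succ_le_succ ?_)
  refine (card_insert_le _ _).trans (Nat.succ_le_succ ?_)
  refine (card_insert_le _ _).trans (Nat.succ_le_succ ?_)
  simp

/-- A graph on `n` vertices with `e` edges contains at least `e(4e - n²)/(3n)` triangles. -/
theorem stmt_10 {V : Type*} [Fintype V] [DecidableEq V] (G : SimpleGraph V)
    [DecidableRel G.Adj] (n e : ℕ) (hn : n = Fintype.card V)
    (he : e = G.edgeFinset.card) :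
    (e : ℝ) * (4 * e - n ^ 2) / (3 * n) ≤ (G.cliqueFinset 3).card := by
  classical
  set F : V → V → ℕ := fun u v => if G.Adj u v then 1 else 0 with hF
  have Fsymm : ∀ u v, F u v = F v u := by
    intro u v
    by_cases h : G.Adj u v
    · have h' : G.Adj v u := h.symm
      simp [hF, h, h']
    · have h' : ¬ G.Adj v u := fun h' => h h'.symm
      simp [hF, h, h']
  have deg_eq : ∀ u, G.degree u = ∑ v, F u v := by
    intro u
    rw [← SimpleGraph.card_neighborFinset_eq_degree, SimpleGraph.neighborFinset_eq_filter,
      card_filter]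
  set Tr : Finset (V × V × V) :=
    univ.filter (fun p => G.Adj p.1 p.2.1 ∧ G.Adj p.1 p.2.2 ∧ G.Adj p.2.1 p.2.2) with hTr
  have Tr_card : Tr.card = ∑ u, ∑ v, ∑ w, F u v * (F u w * F v w) := by
    rw [hTr, card_filter, Fintype.sum_prod_type]
    refine Finset.sum_congr rfl fun u _ => ?_
    rw [Fintype.sum_prod_type]
    exact Finset.sum_congr rfl fun v _ => Finset.sum_congr rfl fun w _ => triple_ite_eq
  -- Tr.card ≤ 6 * #triangles
  have h1 : Tr.card ≤ 6 * (G.cliqueFinset 3).card := by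
    rw [card_eq_sum_card_fiberwise (f := fun p : V×V×V => ({p.1, p.2.1, p.2.2} : Finset V))
      (t := G.cliqueFinset 3) ?_]
    · refine (sum_le_card_nsmul _ _ 6 ?_).trans ?_
      · rintro s -
        by_cases hne : (Tr.filter fun p => ({p.1, p.2.1, p.2.2} : Finset V) = s).Nonempty
        · obtain ⟨⟨a, b, c⟩, hp⟩ := hne
          simp only [hTr, mem_filter, mem_univ, true_and] at hp
          obtain ⟨⟨hab, hac, hbc⟩, hs3⟩ := hp
          refine (card_le_card ?_).trans (six_perm_card a b c)
          rintro ⟨u, v, w⟩ hq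
          simp only [hTr, mem_filter, mem_univ, true_and] at hq
          obtain ⟨⟨huv, huw, hvw⟩, hq2⟩ := hq
          rw [← hs3] at hq2
          have hu : u = a ∨ u = b ∨ u = c := by
            have : u ∈ ({a, b, c} : Finset V) := hq2 ▸ (by simp)
            simpa using this
          have hv : v = a ∨ v = b ∨ v = c := by
            have : v ∈ ({a, b, c} : Finset V) := hq2 ▸ (by simp)
            simpa using this
          have hw : w = a ∨ w = b ∨ w = c := by
            have : w ∈ ({a, b, c} : Finset V) := hq2 ▸ (by simp)
            simpa using this
          have h1 := huv.ne
          have h2 := huw.ne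
          have h3 := hvw.ne
          simp only [mem_insert, mem_singleton, Prod.mk.injEq]
          rcases hu with rfl | rfl | rfl <;> rcases hv with rfl | rfl | rfl <;>
            rcases hw with rfl | rfl | rfl <;> simp_all
        · rw [not_nonempty_iff_eq_empty] at hne
          simp [hne]
      · simp [mul_comm]
    · rintro ⟨u, v, w⟩ hp
      simp only [hTr, Finset.mem_coe, mem_filter, mem_univ, true_and] at hp
      rw [Finset.mem_coe, SimpleGraph.mem_cliqueFinset_iff]
      exact SimpleGraph.is3Clique_triple_iff.2 ⟨hp.1, hp.2.1, hp.2.2⟩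
  -- pointwise key inequality
  have key : ∀ u v, F u v * (G.degree u + G.degree v) ≤
      F u v * Fintype.card V + ∑ w, F u v * (F u w * F v w) := by
    intro u v
    by_cases h : G.Adj u v
    · have hF1 : F u v = 1 := if_pos h
      rw [hF1]
      simp only [one_mul]
      have hinter : (G.neighborFinset u ∩ G.neighborFinset v).card = ∑ w, F u w * F v w := by
        have : G.neighborFinset u ∩ G.neighborFinset v =
            univ.filter (fun w => G.Adj u w ∧ G.Adj v w) := by
          ext w; simp [SimpleGraph.mem_neighborFinset]
        rw [this, card_filter]
        refine Finset.sum_congr rfl fun w _ => ?_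
        by_cases h1 : G.Adj u w <;> by_cases h2 : G.Adj v w <;> simp [hF, *]
      have hcui := Finset.card_union_add_card_inter (G.neighborFinset u) (G.neighborFinset v)
      have hun : (G.neighborFinset u ∪ G.neighborFinset v).card ≤ Fintype.card V :=
        (card_le_card (subset_univ _)).trans_eq card_univ
      have hdu : (G.neighborFinset u).card = G.degree u :=
        G.card_neighborFinset_eq_degree u
      have hdv : (G.neighborFinset v).card = G.degree v :=
        G.card_neighborFinset_eq_degree v
      rw [← hinter]
      omega
    · have hF0 : F u v = 0 := if_neg h
      simp [hF0]
  -- sum it up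
  have sumkey : 2 * ∑ v, G.degree v ^ 2 ≤ 2 * e * Fintype.card V + Tr.card := by
    have hs := Finset.sum_le_sum (s := (univ : Finset V)) fun u _ =>
      Finset.sum_le_sum (s := (univ : Finset V)) fun v _ => key u v
    have lhs_eq : ∑ u, ∑ v, F u v * (G.degree u + G.degree v) = 2 * ∑ v, G.degree v ^ 2 := by
      have e1 : ∑ u, ∑ v, F u v * G.degree u = ∑ v, G.degree v ^ 2 := by
        refine Finset.sum_congr rfl fun u _ => ?_
        rw [← Finset.sum_mul, ← deg_eq, sq]
      have e2 : ∑ u, ∑ v, F u v * G.degree v = ∑ v, G.degree v ^ 2 := by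
        rw [Finset.sum_comm]
        refine Finset.sum_congr rfl fun v _ => ?_
        rw [← Finset.sum_mul]
        have : ∑ u, F u v = G.degree v := by
          rw [deg_eq]
          exact Finset.sum_congr rfl fun u _ => Fsymm u v
        rw [this, sq]
      calc ∑ u, ∑ v, F u v * (G.degree u + G.degree v)
          = ∑ u, ∑ v, (F u v * G.degree u + F u v * G.degree v) := by
            simp [mul_add]
        _ = 2 * ∑ v, G.degree v ^ 2 := by
            simp only [Finset.sum_add_distrib]
            rw [e1, e2]; ring
    have rhs_eq : ∑ u, ∑ v, (F u v * Fintype.card V + ∑ w, F u v * (F u w * F v w)) =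
        2 * e * Fintype.card V + Tr.card := by
      simp only [Finset.sum_add_distrib]
      rw [Tr_card]
      congr 1
      have : ∑ u, ∑ v, F u v * Fintype.card V = (∑ u, ∑ v, F u v) * Fintype.card V := by
        rw [Finset.sum_mul]
        exact Finset.sum_congr rfl fun u _ => (Finset.sum_mul _ _ _).symm
      rw [this]
      have hd : ∑ u, ∑ v, F u v = 2 * e := by
        have : ∑ u : V, ∑ v, F u v = ∑ u, G.degree u :=
          Finset.sum_congr rfl fun u _ => (deg_eq u).symm
        rw [this, G.sum_degrees_eq_twice_card_edges, he]
      rw [hd]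
    calc 2 * ∑ v, G.degree v ^ 2 = ∑ u, ∑ v, F u v * (G.degree u + G.degree v) := lhs_eq.symm
      _ ≤ ∑ u, ∑ v, (F u v * Fintype.card V + ∑ w, F u v * (F u w * F v w)) :=
        Finset.sum_le_sum fun u _ => Finset.sum_le_sum fun v _ => key u v
      _ = 2 * e * Fintype.card V + Tr.card := rhs_eq
  -- combine in ℕ
  have main : 2 * ∑ v, G.degree v ^ 2 ≤ 2 * e * n + 6 * (G.cliqueFinset 3).card := by
    rw [hn]; omega
  -- Cauchy–Schwarz in ℝ
  have cauchy : ((2 * e : ℕ) : ℝ) ^ 2 ≤ (n : ℝ) * ((∑ v, G.degree v ^ 2 : ℕ) : ℝ) := by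
    have h := sq_sum_le_card_mul_sum_sq (s := (univ : Finset V))
      (f := fun v => (G.degree v : ℝ))
    have hsum : ∑ v, (G.degree v : ℝ) = ((2 * e : ℕ) : ℝ) := by
      rw [← Nat.cast_sum]
      norm_cast
      rw [G.sum_degrees_eq_twice_card_edges, he]
    rw [hsum] at h
    refine h.trans_eq ?_
    rw [card_univ, ← hn]
    push_cast
    ring
  -- final arithmetic
  rcases Nat.eq_zero_or_pos n with hn0 | hn0
  · rw [hn0]
    push_cast
    rw [mul_zero, div_zero]
    positivity
  · rw [div_le_iff₀ (by positivity)]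
    have hmain : ((2 * ∑ v, G.degree v ^ 2 : ℕ) : ℝ) ≤
        ((2 * e * n + 6 * (G.cliqueFinset 3).card : ℕ) : ℝ) := Nat.cast_le.2 main
    have hnn : (0:ℝ) ≤ (n:ℝ) := Nat.cast_nonneg n
    push_cast at hmain cauchy ⊢
    nlinarith [mul_le_mul_of_nonneg_left hmain hnn, cauchy]
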